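/- Let a : ℕ → ℚ satisfy a(0) = 0 and a(n) = (n+2)·a(n−1) + n·n! for all n ≥ 1. Then a(n) = (n+2)!·(H_{n+2} − 2) + (n+1)! for all n ≥ 0, where H_m = ∑_{k=1}^{m} 1/k is the m-th harmonic number. -/
import Mathlib


/-- if `a : ℕ → ℚ` satisfies `a 0 = 0` and `a n = (n+2)·a (n−1) + n·n!` for
`n ≥ 1`, then `a n = (n+2)!·(H_{n+2} − 2) + (n+1)!` where `H_m = ∑_{k=1}^m 1/k`. -/
theorem g5_series_closed_form (a : ℕ → ℚ) (h0 : a 0 = 0)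
    (hrec : ∀ n : ℕ, 1 ≤ n → a n = (n + 2) * a (n - 1) + n * (n.factorial : ℚ)) :
    ∀ n : ℕ, a n = ((n + 2).factorial : ℚ) * ((∑ k ∈ Finset.Icc 1 (n + 2), (1 : ℚ) / k) - 2)
      + ((n + 1).factorial : ℚ) := by
  intro n
  induction n with
  | zero =>
    rw [h0]
    norm_num [show Finset.Icc 1 2 = {1, 2} by decide, Nat.factorial]
  | succ n ih =>
    have h := hrec (n + 1) (by omega)
    simp only [Nat.add_sub_cancel] at h
    rw [h, show n + 1 + 2 = (n + 2) + 1 from rfl,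
      Finset.sum_Icc_succ_top (by omega : 1 ≤ (n + 2) + 1), ih]
    have h3 : ((n : ℚ) + 2 + 1) ≠ 0 := by positivity
    push_cast [Nat.factorial_succ]
    field_simp
    ring
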